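/- Hypoellipticity of the decay weight symbol: the symbol d(x,ξ,τ) = (1 + |x|²/(μ + |τ| + |ξ|²))^{1/4 + ε/2} on ℝ² × ℝ² × ℝ (with μ ≥ 1, 0 < ε < 1/2) satisfies, for all multi-indices α, β, |∂_ξ^α ∂_x^β d(x,ξ,τ)| ≤ C_{αβ} · d(x,ξ,τ) · ⟨(ξ,τ)⟩^{-|α|} for all (x,ξ,τ), where ⟨(ξ,τ)⟩ = (1 + |τ| + |ξ|²)^{1/2}. -/

import Mathlib

set_option linter.unusedTactic false

/-- The decay-weight symbol `d(x,ξ,τ) = (1 + |x|²/(μ+|τ|+|ξ|²))^{1/4+ε/2}` on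
`ℝ²_x × ℝ²_ξ × ℝ_τ`, encoded on `(ℝ×ℝ) × (ℝ×ℝ) × ℝ`. -/
noncomputable def decaySymbol (μ ε : ℝ) : (ℝ × ℝ) × (ℝ × ℝ) × ℝ → ℝ :=
  fun p => (1 + (p.1.1 ^ 2 + p.1.2 ^ 2) / (μ + |p.2.2| + p.2.1.1 ^ 2 + p.2.1.2 ^ 2))
    ^ (1 / 4 + ε / 2 : ℝ)

/-- `k`-fold directional (partial) derivative in the direction `v`. -/
noncomputable def pdir (v : (ℝ × ℝ) × (ℝ × ℝ) × ℝ) (k : ℕ)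
    (f : (ℝ × ℝ) × (ℝ × ℝ) × ℝ → ℝ) : (ℝ × ℝ) × (ℝ × ℝ) × ℝ → ℝ :=
  (fun g p => lineDeriv ℝ g p v)^[k] f

namespace Stmt12

abbrev P : Type := (ℝ × ℝ) × (ℝ × ℝ) × ℝ

/-- A symbolic term `c · x1^e1 x2^e2 ξ1^f1 ξ2^f2 · D^{-m} · g^{r-k}`. -/
structure Tm where
  c : ℝ
  e1 : ℕ
  e2 : ℕ
  f1 : ℕ
  f2 : ℕ
  m : ℕ
  k : ℕ

noncomputable def Dn (μ : ℝ) (p : P) : ℝ := μ + |p.2.2| + p.2.1.1 ^ 2 + p.2.1.2 ^ 2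

noncomputable def gn (μ : ℝ) (p : P) : ℝ := 1 + (p.1.1 ^ 2 + p.1.2 ^ 2) / Dn μ p

noncomputable def Tm.eval (μ r : ℝ) (T : Tm) (p : P) : ℝ :=
  T.c * p.1.1 ^ T.e1 * p.1.2 ^ T.e2 * p.2.1.1 ^ T.f1 * p.2.1.2 ^ T.f2
    * ((Dn μ p)⁻¹) ^ T.m * gn μ p ^ (r - (T.k : ℝ))

noncomputable def evalL (μ r : ℝ) (L : List Tm) (p : P) : ℝ :=
  (L.map (fun T => T.eval μ r p)).sum

lemma Dn_pos {μ : ℝ} (hμ : 1 ≤ μ) (p : P) : 0 < Dn μ p := by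
  have h1 := abs_nonneg p.2.2
  have h2 := sq_nonneg p.2.1.1
  have h3 := sq_nonneg p.2.1.2
  unfold Dn; nlinarith

lemma one_le_Dn {μ : ℝ} (hμ : 1 ≤ μ) (p : P) : 1 ≤ Dn μ p := by
  have h1 := abs_nonneg p.2.2
  have h2 := sq_nonneg p.2.1.1
  have h3 := sq_nonneg p.2.1.2
  unfold Dn; nlinarith

lemma one_le_gn {μ : ℝ} (hμ : 1 ≤ μ) (p : P) : 1 ≤ gn μ p := by
  have h := Dn_pos hμ p
  have : 0 ≤ (p.1.1 ^ 2 + p.1.2 ^ 2) / Dn μ p := by positivity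
  unfold gn; linarith

lemma gn_pos {μ : ℝ} (hμ : 1 ≤ μ) (p : P) : 0 < gn μ p :=
  lt_of_lt_of_le one_pos (one_le_gn hμ p)

lemma evalL_cons (μ r : ℝ) (T : Tm) (L : List Tm) (p : P) :
    evalL μ r (T :: L) p = T.eval μ r p + evalL μ r L p := by
  simp [evalL]

lemma evalL_append (μ r : ℝ) (L1 L2 : List Tm) (p : P) :
    evalL μ r (L1 ++ L2) p = evalL μ r L1 p + evalL μ r L2 p := by
  simp [evalL]

/-! ### Symbolic derivative term lists in the four coordinate directions -/

noncomputable def dX1 (r : ℝ) (T : Tm) : List Tm :=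
  [⟨T.c * T.e1, T.e1 - 1, T.e2, T.f1, T.f2, T.m, T.k⟩,
   ⟨T.c * (2 * (r - T.k)), T.e1 + 1, T.e2, T.f1, T.f2, T.m + 1, T.k + 1⟩]

noncomputable def dX2 (r : ℝ) (T : Tm) : List Tm :=
  [⟨T.c * T.e2, T.e1, T.e2 - 1, T.f1, T.f2, T.m, T.k⟩,
   ⟨T.c * (2 * (r - T.k)), T.e1, T.e2 + 1, T.f1, T.f2, T.m + 1, T.k + 1⟩]

noncomputable def dXi1 (r : ℝ) (T : Tm) : List Tm :=
  [⟨T.c * T.f1, T.e1, T.e2, T.f1 - 1, T.f2, T.m, T.k⟩,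
   ⟨T.c * (-2 * T.m), T.e1, T.e2, T.f1 + 1, T.f2, T.m + 1, T.k⟩,
   ⟨T.c * (-2 * (r - T.k)), T.e1 + 2, T.e2, T.f1 + 1, T.f2, T.m + 2, T.k + 1⟩,
   ⟨T.c * (-2 * (r - T.k)), T.e1, T.e2 + 2, T.f1 + 1, T.f2, T.m + 2, T.k + 1⟩]

noncomputable def dXi2 (r : ℝ) (T : Tm) : List Tm :=
  [⟨T.c * T.f2, T.e1, T.e2, T.f1, T.f2 - 1, T.m, T.k⟩,
   ⟨T.c * (-2 * T.m), T.e1, T.e2, T.f1, T.f2 + 1, T.m + 1, T.k⟩,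
   ⟨T.c * (-2 * (r - T.k)), T.e1 + 2, T.e2, T.f1, T.f2 + 1, T.m + 2, T.k + 1⟩,
   ⟨T.c * (-2 * (r - T.k)), T.e1, T.e2 + 2, T.f1, T.f2 + 1, T.m + 2, T.k + 1⟩]

/-! ### The four directional derivative computations -/

lemma hasDerivAt_dX1 {μ : ℝ} (hμ : 1 ≤ μ) (r : ℝ) (T : Tm) (p : P) :
    HasDerivAt (fun t : ℝ => T.eval μ r (p + t • ((((1:ℝ),(0:ℝ)), ((0:ℝ),(0:ℝ)), (0:ℝ)) : P)))
      (evalL μ r (dX1 r T) p) 0 := by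
  have hD := Dn_pos hμ p
  have hkey : ∀ t : ℝ, (p + t • ((((1:ℝ),(0:ℝ)), ((0:ℝ),(0:ℝ)), (0:ℝ)) : P))
      = ((p.1.1 + t, p.1.2), p.2) := by
    intro t
    simp [Prod.ext_iff]
  have hDq : ∀ t : ℝ, Dn μ (((p.1.1 + t, p.1.2), p.2) : P) = Dn μ p := fun t => rfl
  have e1 : ∀ t : ℝ, T.eval μ r (p + t • ((((1:ℝ),(0:ℝ)), ((0:ℝ),(0:ℝ)), (0:ℝ)) : P))
      = (T.c * (p.1.1 + t) ^ T.e1)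
          * (p.1.2 ^ T.e2 * p.2.1.1 ^ T.f1 * p.2.1.2 ^ T.f2 * ((Dn μ p)⁻¹) ^ T.m)
          * (1 + ((p.1.1 + t) ^ 2 + p.1.2 ^ 2) / Dn μ p) ^ (r - (T.k : ℝ)) := by
    intro t
    rw [hkey t]
    show T.c * (p.1.1 + t) ^ T.e1 * p.1.2 ^ T.e2 * p.2.1.1 ^ T.f1 * p.2.1.2 ^ T.f2
      * ((Dn μ (((p.1.1 + t, p.1.2), p.2) : P))⁻¹) ^ T.m
      * gn μ (((p.1.1 + t, p.1.2), p.2) : P) ^ (r - (T.k : ℝ)) = _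
    rw [hDq]
    show _ * (1 + ((p.1.1 + t) ^ 2 + p.1.2 ^ 2) / Dn μ (((p.1.1 + t, p.1.2), p.2) : P))
        ^ (r - (T.k : ℝ)) = _
    rw [hDq]
    ring
  simp only [e1]
  have h1 : HasDerivAt (fun t : ℝ => p.1.1 + t) 1 0 := (hasDerivAt_id (0:ℝ)).const_add p.1.1
  have hpow := h1.pow T.e1
  have hginner := (((h1.pow 2).add_const (p.1.2 ^ 2)).div_const (Dn μ p)).const_add 1
  have hgval : 1 + ((p.1.1 + 0) ^ 2 + p.1.2 ^ 2) / Dn μ p = gn μ p := by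
    simp [gn]
  have hgpos : (0:ℝ) < 1 + ((p.1.1 + 0) ^ 2 + p.1.2 ^ 2) / Dn μ p := by
    rw [hgval]; exact gn_pos hμ p
  have hrpow := hginner.rpow_const (p := r - (T.k : ℝ)) (Or.inl hgpos.ne')
  have hmul := ((hpow.const_mul T.c).mul_const
      (p.1.2 ^ T.e2 * p.2.1.1 ^ T.f1 * p.2.1.2 ^ T.f2 * ((Dn μ p)⁻¹) ^ T.m)).mul hrpow
  refine hmul.congr_deriv ?_
  symm
  simp only [Pi.pow_apply, Pi.mul_apply, Pi.inv_apply]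
  have hgval' : 1 + (p.1.1 ^ 2 + p.1.2 ^ 2) / Dn μ p = gn μ p := by simp [gn]
  have hexp : r - ((T.k + 1 : ℕ) : ℝ) = r - (T.k : ℝ) - 1 := by push_cast; ring
  simp only [evalL, dX1, Tm.eval, List.map_cons, List.map_nil, List.sum_cons, List.sum_nil,
    add_zero, hgval', hexp]
  push_cast
  ring

lemma hasDerivAt_dX2 {μ : ℝ} (hμ : 1 ≤ μ) (r : ℝ) (T : Tm) (p : P) :
    HasDerivAt (fun t : ℝ => T.eval μ r (p + t • ((((0:ℝ),(1:ℝ)), ((0:ℝ),(0:ℝ)), (0:ℝ)) : P)))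
      (evalL μ r (dX2 r T) p) 0 := by
  have hD := Dn_pos hμ p
  have hkey : ∀ t : ℝ, (p + t • ((((0:ℝ),(1:ℝ)), ((0:ℝ),(0:ℝ)), (0:ℝ)) : P))
      = ((p.1.1, p.1.2 + t), p.2) := by
    intro t
    simp [Prod.ext_iff]
  have hDq : ∀ t : ℝ, Dn μ (((p.1.1, p.1.2 + t), p.2) : P) = Dn μ p := fun t => rfl
  have e1 : ∀ t : ℝ, T.eval μ r (p + t • ((((0:ℝ),(1:ℝ)), ((0:ℝ),(0:ℝ)), (0:ℝ)) : P))
      = ((T.c * p.1.1 ^ T.e1) * (p.1.2 + t) ^ T.e2)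
          * (p.2.1.1 ^ T.f1 * p.2.1.2 ^ T.f2 * ((Dn μ p)⁻¹) ^ T.m)
          * (1 + (p.1.1 ^ 2 + (p.1.2 + t) ^ 2) / Dn μ p) ^ (r - (T.k : ℝ)) := by
    intro t
    rw [hkey t]
    show T.c * p.1.1 ^ T.e1 * (p.1.2 + t) ^ T.e2 * p.2.1.1 ^ T.f1 * p.2.1.2 ^ T.f2
      * ((Dn μ (((p.1.1, p.1.2 + t), p.2) : P))⁻¹) ^ T.m
      * gn μ (((p.1.1, p.1.2 + t), p.2) : P) ^ (r - (T.k : ℝ)) = _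
    rw [hDq]
    show _ * (1 + (p.1.1 ^ 2 + (p.1.2 + t) ^ 2) / Dn μ (((p.1.1, p.1.2 + t), p.2) : P))
        ^ (r - (T.k : ℝ)) = _
    rw [hDq]
    ring
  simp only [e1]
  have h1 : HasDerivAt (fun t : ℝ => p.1.2 + t) 1 0 := (hasDerivAt_id (0:ℝ)).const_add p.1.2
  have hpow := h1.pow T.e2
  have hginner := (((h1.pow 2).const_add (p.1.1 ^ 2)).div_const (Dn μ p)).const_add 1
  have hgval : 1 + (p.1.1 ^ 2 + (p.1.2 + 0) ^ 2) / Dn μ p = gn μ p := by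
    simp [gn]
  have hgpos : (0:ℝ) < 1 + (p.1.1 ^ 2 + (p.1.2 + 0) ^ 2) / Dn μ p := by
    rw [hgval]; exact gn_pos hμ p
  have hrpow := hginner.rpow_const (p := r - (T.k : ℝ)) (Or.inl hgpos.ne')
  have hmul := (((hpow.const_mul (T.c * p.1.1 ^ T.e1)).mul_const
      (p.2.1.1 ^ T.f1 * p.2.1.2 ^ T.f2 * ((Dn μ p)⁻¹) ^ T.m)).mul hrpow)
  refine hmul.congr_deriv ?_
  symm
  simp only [Pi.pow_apply, Pi.mul_apply, Pi.inv_apply]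
  have hgval' : 1 + (p.1.1 ^ 2 + p.1.2 ^ 2) / Dn μ p = gn μ p := by simp [gn]
  have hexp : r - ((T.k + 1 : ℕ) : ℝ) = r - (T.k : ℝ) - 1 := by push_cast; ring
  simp only [evalL, dX2, Tm.eval, List.map_cons, List.map_nil, List.sum_cons, List.sum_nil,
    add_zero, hgval', hexp]
  push_cast
  ring

lemma hasDerivAt_dXi1 {μ : ℝ} (hμ : 1 ≤ μ) (r : ℝ) (T : Tm) (p : P) :
    HasDerivAt (fun t : ℝ => T.eval μ r (p + t • ((((0:ℝ),(0:ℝ)), ((1:ℝ),(0:ℝ)), (0:ℝ)) : P)))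
      (evalL μ r (dXi1 r T) p) 0 := by
  obtain ⟨c, u1, u2, w1, w2, m, k⟩ := T
  have hkey : ∀ t : ℝ, (p + t • ((((0:ℝ),(0:ℝ)), ((1:ℝ),(0:ℝ)), (0:ℝ)) : P))
      = (p.1, (p.2.1.1 + t, p.2.1.2), p.2.2) := by
    intro t
    simp [Prod.ext_iff]
  have hfun : ∀ t : ℝ, Tm.eval μ r ⟨c, u1, u2, w1, w2, m, k⟩
        (p + t • ((((0:ℝ),(0:ℝ)), ((1:ℝ),(0:ℝ)), (0:ℝ)) : P))
      = ((c * p.1.1 ^ u1 * p.1.2 ^ u2) * (p.2.1.1 + t) ^ w1) * p.2.1.2 ^ w2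
          * ((μ + |p.2.2| + (p.2.1.1 + t) ^ 2 + p.2.1.2 ^ 2)⁻¹) ^ m
          * (1 + (p.1.1 ^ 2 + p.1.2 ^ 2)
              * (μ + |p.2.2| + (p.2.1.1 + t) ^ 2 + p.2.1.2 ^ 2)⁻¹) ^ (r - (k : ℝ)) := by
    intro t
    rw [hkey t]
    show c * p.1.1 ^ u1 * p.1.2 ^ u2 * (p.2.1.1 + t) ^ w1 * p.2.1.2 ^ w2
      * ((μ + |p.2.2| + (p.2.1.1 + t) ^ 2 + p.2.1.2 ^ 2)⁻¹) ^ m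
      * (1 + (p.1.1 ^ 2 + p.1.2 ^ 2) / (μ + |p.2.2| + (p.2.1.1 + t) ^ 2 + p.2.1.2 ^ 2))
          ^ (r - (k : ℝ)) = _
    rw [div_eq_mul_inv]
  simp only [hfun]
  have h1 : HasDerivAt (fun t : ℝ => p.2.1.1 + t) 1 0 := (hasDerivAt_id (0:ℝ)).const_add p.2.1.1
  have hDf := ((h1.pow 2).const_add (μ + |p.2.2|)).add_const (p.2.1.2 ^ 2)
  have hD0 : μ + |p.2.2| + (p.2.1.1 + 0) ^ 2 + p.2.1.2 ^ 2 = Dn μ p := by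
    simp [Dn]
  have hDpos0 : (0:ℝ) < μ + |p.2.2| + (p.2.1.1 + 0) ^ 2 + p.2.1.2 ^ 2 := by
    rw [hD0]; exact Dn_pos hμ p
  have hinv := hDf.inv hDpos0.ne'
  have hinvpow := hinv.pow m
  have hgi := (hinv.const_mul (p.1.1 ^ 2 + p.1.2 ^ 2)).const_add 1
  have hg0 : 1 + (p.1.1 ^ 2 + p.1.2 ^ 2) * (μ + |p.2.2| + (p.2.1.1 + 0) ^ 2 + p.2.1.2 ^ 2)⁻¹
      = gn μ p := by
    rw [hD0, gn, div_eq_mul_inv]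
  have hgpos0 : (0:ℝ) < 1 + (p.1.1 ^ 2 + p.1.2 ^ 2)
      * (μ + |p.2.2| + (p.2.1.1 + 0) ^ 2 + p.2.1.2 ^ 2)⁻¹ := by
    rw [hg0]; exact gn_pos hμ p
  have hgr := hgi.rpow_const (p := r - (k : ℝ)) (Or.inl hgpos0.ne')
  have hmul := (((((h1.pow w1).const_mul (c * p.1.1 ^ u1 * p.1.2 ^ u2)).mul_const
      (p.2.1.2 ^ w2)).mul hinvpow).mul hgr)
  refine hmul.congr_deriv ?_
  symm
  simp only [Pi.pow_apply, Pi.mul_apply, Pi.inv_apply]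
  have hexp : r - ((k + 1 : ℕ) : ℝ) = r - (k : ℝ) - 1 := by push_cast; ring
  have hD0' : μ + |p.2.2| + p.2.1.1 ^ 2 + p.2.1.2 ^ 2 = Dn μ p := rfl
  have hgn' : 1 + (p.1.1 ^ 2 + p.1.2 ^ 2) * (Dn μ p)⁻¹ = gn μ p := by
    rw [gn, div_eq_mul_inv]
  simp only [evalL, dXi1, Tm.eval, List.map_cons, List.map_nil, List.sum_cons, List.sum_nil,
    add_zero]
  rw [hD0']
  simp only [hexp, hgn']
  cases m with
  | zero => push_cast; ring
  | succ n => push_cast; ring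

lemma hasDerivAt_dXi2 {μ : ℝ} (hμ : 1 ≤ μ) (r : ℝ) (T : Tm) (p : P) :
    HasDerivAt (fun t : ℝ => T.eval μ r (p + t • ((((0:ℝ),(0:ℝ)), ((0:ℝ),(1:ℝ)), (0:ℝ)) : P)))
      (evalL μ r (dXi2 r T) p) 0 := by
  obtain ⟨c, u1, u2, w1, w2, m, k⟩ := T
  have hkey : ∀ t : ℝ, (p + t • ((((0:ℝ),(0:ℝ)), ((0:ℝ),(1:ℝ)), (0:ℝ)) : P))
      = (p.1, (p.2.1.1, p.2.1.2 + t), p.2.2) := by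
    intro t
    simp [Prod.ext_iff]
  have hfun : ∀ t : ℝ, Tm.eval μ r ⟨c, u1, u2, w1, w2, m, k⟩
        (p + t • ((((0:ℝ),(0:ℝ)), ((0:ℝ),(1:ℝ)), (0:ℝ)) : P))
      = ((c * p.1.1 ^ u1 * p.1.2 ^ u2 * p.2.1.1 ^ w1) * (p.2.1.2 + t) ^ w2)
          * ((μ + |p.2.2| + p.2.1.1 ^ 2 + (p.2.1.2 + t) ^ 2)⁻¹) ^ m
          * (1 + (p.1.1 ^ 2 + p.1.2 ^ 2)
              * (μ + |p.2.2| + p.2.1.1 ^ 2 + (p.2.1.2 + t) ^ 2)⁻¹) ^ (r - (k : ℝ)) := by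
    intro t
    rw [hkey t]
    show c * p.1.1 ^ u1 * p.1.2 ^ u2 * p.2.1.1 ^ w1 * (p.2.1.2 + t) ^ w2
      * ((μ + |p.2.2| + p.2.1.1 ^ 2 + (p.2.1.2 + t) ^ 2)⁻¹) ^ m
      * (1 + (p.1.1 ^ 2 + p.1.2 ^ 2) / (μ + |p.2.2| + p.2.1.1 ^ 2 + (p.2.1.2 + t) ^ 2))
          ^ (r - (k : ℝ)) = _
    rw [div_eq_mul_inv]
  simp only [hfun]
  have h1 : HasDerivAt (fun t : ℝ => p.2.1.2 + t) 1 0 := (hasDerivAt_id (0:ℝ)).const_add p.2.1.2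
  have hDf := (h1.pow 2).const_add (μ + |p.2.2| + p.2.1.1 ^ 2)
  have hD0 : μ + |p.2.2| + p.2.1.1 ^ 2 + (p.2.1.2 + 0) ^ 2 = Dn μ p := by
    simp [Dn]
  have hDpos0 : (0:ℝ) < μ + |p.2.2| + p.2.1.1 ^ 2 + (p.2.1.2 + 0) ^ 2 := by
    rw [hD0]; exact Dn_pos hμ p
  have hinv := hDf.inv hDpos0.ne'
  have hinvpow := hinv.pow m
  have hgi := (hinv.const_mul (p.1.1 ^ 2 + p.1.2 ^ 2)).const_add 1
  have hg0 : 1 + (p.1.1 ^ 2 + p.1.2 ^ 2) * (μ + |p.2.2| + p.2.1.1 ^ 2 + (p.2.1.2 + 0) ^ 2)⁻¹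
      = gn μ p := by
    rw [hD0, gn, div_eq_mul_inv]
  have hgpos0 : (0:ℝ) < 1 + (p.1.1 ^ 2 + p.1.2 ^ 2)
      * (μ + |p.2.2| + p.2.1.1 ^ 2 + (p.2.1.2 + 0) ^ 2)⁻¹ := by
    rw [hg0]; exact gn_pos hμ p
  have hgr := hgi.rpow_const (p := r - (k : ℝ)) (Or.inl hgpos0.ne')
  have hmul := ((((h1.pow w2).const_mul
      (c * p.1.1 ^ u1 * p.1.2 ^ u2 * p.2.1.1 ^ w1)).mul hinvpow).mul hgr)
  refine hmul.congr_deriv ?_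
  symm
  simp only [Pi.pow_apply, Pi.mul_apply, Pi.inv_apply]
  have hexp : r - ((k + 1 : ℕ) : ℝ) = r - (k : ℝ) - 1 := by push_cast; ring
  have hD0' : μ + |p.2.2| + p.2.1.1 ^ 2 + p.2.1.2 ^ 2 = Dn μ p := rfl
  have hgn' : 1 + (p.1.1 ^ 2 + p.1.2 ^ 2) * (Dn μ p)⁻¹ = gn μ p := by
    rw [gn, div_eq_mul_inv]
  simp only [evalL, dXi2, Tm.eval, List.map_cons, List.map_nil, List.sum_cons, List.sum_nil,
    add_zero]
  rw [hD0']
  simp only [hexp, hgn']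
  cases m with
  | zero => push_cast; ring
  | succ n => push_cast; ring

/-! ### Iterating line derivatives symbolically -/

lemma hasDerivAt_evalL {μ : ℝ} (r : ℝ) (v : P) (d : Tm → List Tm)
    (hd : ∀ T (p : P), HasDerivAt (fun t : ℝ => Tm.eval μ r T (p + t • v))
      (evalL μ r (d T) p) 0) (L : List Tm) (p : P) :
    HasDerivAt (fun t : ℝ => evalL μ r L (p + t • v)) (evalL μ r (L.flatMap d) p) 0 := by
  induction L with
  | nil => simpa [evalL] using hasDerivAt_const (0:ℝ) (0:ℝ)
  | cons T L ih =>
      simp only [evalL_cons, List.flatMap_cons, evalL_append]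
      exact (hd T p).add ih

lemma pdir_evalL {μ : ℝ} (r : ℝ) (v : P) (d : Tm → List Tm)
    (hd : ∀ T (p : P), HasDerivAt (fun t : ℝ => Tm.eval μ r T (p + t • v))
      (evalL μ r (d T) p) 0) (n : ℕ) (L : List Tm) :
    pdir v n (evalL μ r L) = evalL μ r ((fun L => L.flatMap d)^[n] L) := by
  induction n with
  | zero => rfl
  | succ n ih =>
      rw [pdir] at ih ⊢
      rw [Function.iterate_succ_apply' (fun g p => lineDeriv ℝ g p v), ih,
        Function.iterate_succ_apply' (fun L : List Tm => L.flatMap d)]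
      funext p
      exact (hasDerivAt_evalL r v d hd ((fun L : List Tm => L.flatMap d)^[n] L) p).deriv

/-! ### Bookkeeping: admissible terms -/

def Good (A : ℕ) (T : Tm) : Prop :=
  T.c = 0 ∨ (T.e1 + T.e2 ≤ 2 * T.k ∧ T.e1 + T.e2 + T.f1 + T.f2 + A ≤ 2 * T.m)

lemma good_dX1 {A : ℕ} {r : ℝ} {T : Tm} (h : Good A T) : ∀ T' ∈ dX1 r T, Good A T' := by
  intro T' hT'
  simp only [dX1, List.mem_cons, List.not_mem_nil, or_false] at hT'
  rcases h with hc | ⟨h1, h2⟩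
  · rcases hT' with rfl | rfl <;> exact Or.inl (by simp [hc])
  · rcases hT' with rfl | rfl <;> exact Or.inr (by constructor <;> simp <;> omega)

lemma good_dX2 {A : ℕ} {r : ℝ} {T : Tm} (h : Good A T) : ∀ T' ∈ dX2 r T, Good A T' := by
  intro T' hT'
  simp only [dX2, List.mem_cons, List.not_mem_nil, or_false] at hT'
  rcases h with hc | ⟨h1, h2⟩
  · rcases hT' with rfl | rfl <;> exact Or.inl (by simp [hc])
  · rcases hT' with rfl | rfl <;> exact Or.inr (by constructor <;> simp <;> omega)

lemma good_dXi1 {A : ℕ} {r : ℝ} {T : Tm} (h : Good A T) : ∀ T' ∈ dXi1 r T, Good (A + 1) T' := by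
  intro T' hT'
  simp only [dXi1, List.mem_cons, List.not_mem_nil, or_false] at hT'
  rcases h with hc | ⟨h1, h2⟩
  · rcases hT' with rfl | rfl | rfl | rfl <;> exact Or.inl (by simp [hc])
  · rcases hT' with rfl | rfl | rfl | rfl
    · by_cases hf : T.f1 = 0
      · exact Or.inl (by simp [hf])
      · exact Or.inr (by constructor <;> simp <;> omega)
    · exact Or.inr (by constructor <;> simp <;> omega)
    · exact Or.inr (by constructor <;> simp <;> omega)
    · exact Or.inr (by constructor <;> simp <;> omega)

lemma good_dXi2 {A : ℕ} {r : ℝ} {T : Tm} (h : Good A T) : ∀ T' ∈ dXi2 r T, Good (A + 1) T' := by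
  intro T' hT'
  simp only [dXi2, List.mem_cons, List.not_mem_nil, or_false] at hT'
  rcases h with hc | ⟨h1, h2⟩
  · rcases hT' with rfl | rfl | rfl | rfl <;> exact Or.inl (by simp [hc])
  · rcases hT' with rfl | rfl | rfl | rfl
    · by_cases hf : T.f2 = 0
      · exact Or.inl (by simp [hf])
      · exact Or.inr (by constructor <;> simp <;> omega)
    · exact Or.inr (by constructor <;> simp <;> omega)
    · exact Or.inr (by constructor <;> simp <;> omega)
    · exact Or.inr (by constructor <;> simp <;> omega)

lemma good_mono {A A' : ℕ} (hAA : A ≤ A') {T : Tm} (h : Good A' T) : Good A T := by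
  rcases h with hc | ⟨h1, h2⟩
  · exact Or.inl hc
  · exact Or.inr ⟨h1, by omega⟩

lemma good_flatMap {A A' : ℕ} (d : Tm → List Tm)
    (hd : ∀ T : Tm, Good A T → ∀ T' ∈ d T, Good A' T') {L : List Tm}
    (hL : ∀ T ∈ L, Good A T) : ∀ T' ∈ L.flatMap d, Good A' T' := by
  intro T' hT'
  rw [List.mem_flatMap] at hT'
  obtain ⟨T, hT, hT'⟩ := hT'
  exact hd T (hL T hT) T' hT'

lemma good_iterate_x {A : ℕ} (d : Tm → List Tm)
    (hd : ∀ (A : ℕ) (T : Tm), Good A T → ∀ T' ∈ d T, Good A T') (n : ℕ) {L : List Tm}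
    (hL : ∀ T ∈ L, Good A T) : ∀ T ∈ (fun L : List Tm => L.flatMap d)^[n] L, Good A T := by
  induction n generalizing L with
  | zero => simpa using hL
  | succ n ih =>
      rw [Function.iterate_succ_apply]
      exact ih (good_flatMap d (hd A) hL)

lemma good_iterate_xi {A : ℕ} (d : Tm → List Tm)
    (hd : ∀ (A : ℕ) (T : Tm), Good A T → ∀ T' ∈ d T, Good (A + 1) T') (n : ℕ) {L : List Tm}
    (hL : ∀ T ∈ L, Good A T) :
    ∀ T ∈ (fun L : List Tm => L.flatMap d)^[n] L, Good (A + n) T := by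
  induction n generalizing A L with
  | zero => simpa using hL
  | succ n ih =>
      rw [Function.iterate_succ_apply]
      have := ih (A := A + 1) (good_flatMap d (hd A) hL)
      intro T hT
      exact good_mono (by omega) (this T hT)

/-! ### The key pointwise estimate for admissible terms -/

lemma eval_bound {μ r : ℝ} (hμ : 1 ≤ μ) {A : ℕ} {T : Tm} (hT : Good A T) (p : P) :
    |T.eval μ r p| ≤ |T.c| * (gn μ p ^ r
      * Real.sqrt (1 + |p.2.2| + p.2.1.1 ^ 2 + p.2.1.2 ^ 2) ^ (-(A:ℝ))) := by
  rcases hT with hc | ⟨h1, h2⟩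
  · simp [Tm.eval, hc]
  have hD := Dn_pos hμ p
  have hD1 := one_le_Dn hμ p
  have hg := gn_pos hμ p
  have hg1 := one_le_gn hμ p
  set Q : ℝ := 1 + |p.2.2| + p.2.1.1 ^ 2 + p.2.1.2 ^ 2 with hQdef
  have hQ0 : 0 < Q := by
    have := abs_nonneg p.2.2
    have := sq_nonneg p.2.1.1
    have := sq_nonneg p.2.1.2
    rw [hQdef]; nlinarith
  have hQD : Q ≤ Dn μ p := by
    rw [hQdef, Dn]; linarith
  have hSgD : gn μ p * Dn μ p = Dn μ p + (p.1.1 ^ 2 + p.1.2 ^ 2) := by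
    rw [gn, add_mul, div_mul_cancel₀ _ hD.ne', one_mul]
  have key1 : |p.1.1| ≤ Real.sqrt (gn μ p) * Real.sqrt (Dn μ p) := by
    rw [← Real.sqrt_mul hg.le, ← Real.sqrt_sq_eq_abs]
    apply Real.sqrt_le_sqrt
    nlinarith [sq_nonneg p.1.2]
  have key2 : |p.1.2| ≤ Real.sqrt (gn μ p) * Real.sqrt (Dn μ p) := by
    rw [← Real.sqrt_mul hg.le, ← Real.sqrt_sq_eq_abs]
    apply Real.sqrt_le_sqrt
    nlinarith [sq_nonneg p.1.1]
  have key3 : |p.2.1.1| ≤ Real.sqrt (Dn μ p) := by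
    rw [← Real.sqrt_sq_eq_abs]
    apply Real.sqrt_le_sqrt
    have := abs_nonneg p.2.2
    have := sq_nonneg p.2.1.2
    rw [Dn]; nlinarith
  have key4 : |p.2.1.2| ≤ Real.sqrt (Dn μ p) := by
    rw [← Real.sqrt_sq_eq_abs]
    apply Real.sqrt_le_sqrt
    have := abs_nonneg p.2.2
    have := sq_nonneg p.2.1.1
    rw [Dn]; nlinarith
  have habs : |T.eval μ r p| = |T.c| * |p.1.1| ^ T.e1 * |p.1.2| ^ T.e2 * |p.2.1.1| ^ T.f1
      * |p.2.1.2| ^ T.f2 * ((Dn μ p)⁻¹) ^ T.m * gn μ p ^ (r - (T.k : ℝ)) := by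
    rw [Tm.eval, abs_mul, abs_mul, abs_mul, abs_mul, abs_mul, abs_mul, abs_pow, abs_pow,
      abs_pow, abs_pow, abs_pow, abs_inv, abs_of_pos hD,
      abs_of_pos (Real.rpow_pos_of_pos hg _)]
  have hgE : ∀ E : ℕ, Real.sqrt (gn μ p) ^ E * gn μ p ^ (r - (T.k : ℝ))
      = gn μ p ^ ((E : ℝ) / 2 + (r - (T.k : ℝ))) := by
    intro E
    rw [Real.sqrt_eq_rpow, ← Real.rpow_natCast (gn μ p ^ (1/(2:ℝ))) E, ← Real.rpow_mul hg.le,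
      ← Real.rpow_add hg]
    congr 1
    ring
  have hDF : ∀ G : ℕ, Real.sqrt (Dn μ p) ^ G * ((Dn μ p)⁻¹) ^ T.m
      = Dn μ p ^ ((G : ℝ) / 2 - (T.m : ℝ)) := by
    intro G
    rw [Real.sqrt_eq_rpow, ← Real.rpow_natCast (Dn μ p ^ (1/(2:ℝ))) G, ← Real.rpow_mul hD.le,
      inv_pow, ← Real.rpow_natCast (Dn μ p) T.m, ← Real.rpow_neg hD.le, ← Real.rpow_add hD]
    congr 1
    ring
  calc |T.eval μ r p|
      ≤ |T.c| * (Real.sqrt (gn μ p) * Real.sqrt (Dn μ p)) ^ T.e1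
          * (Real.sqrt (gn μ p) * Real.sqrt (Dn μ p)) ^ T.e2
          * Real.sqrt (Dn μ p) ^ T.f1 * Real.sqrt (Dn μ p) ^ T.f2
          * ((Dn μ p)⁻¹) ^ T.m * gn μ p ^ (r - (T.k : ℝ)) := by
        rw [habs]
        gcongr <;> first
          | exact key1 | exact key2 | exact key3 | exact key4 | positivity
    _ = |T.c| * ((Real.sqrt (gn μ p) ^ (T.e1 + T.e2) * gn μ p ^ (r - (T.k : ℝ)))
          * (Real.sqrt (Dn μ p) ^ (T.e1 + T.e2 + T.f1 + T.f2) * ((Dn μ p)⁻¹) ^ T.m)) := by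
        rw [pow_add, pow_add, pow_add, mul_pow, mul_pow]
        ring
    _ = |T.c| * (gn μ p ^ (((T.e1 + T.e2 : ℕ) : ℝ) / 2 + (r - (T.k : ℝ)))
          * Dn μ p ^ (((T.e1 + T.e2 + T.f1 + T.f2 : ℕ) : ℝ) / 2 - (T.m : ℝ))) := by
        rw [hgE, hDF]
    _ ≤ |T.c| * (gn μ p ^ r * Real.sqrt Q ^ (-(A:ℝ))) := by
        have b1 : gn μ p ^ (((T.e1 + T.e2 : ℕ) : ℝ) / 2 + (r - (T.k : ℝ))) ≤ gn μ p ^ r := by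
          apply Real.rpow_le_rpow_of_exponent_le hg1
          have : ((T.e1 + T.e2 : ℕ) : ℝ) ≤ 2 * (T.k : ℝ) := by exact_mod_cast h1
          push_cast at this ⊢
          linarith
        have b2 : Dn μ p ^ (((T.e1 + T.e2 + T.f1 + T.f2 : ℕ) : ℝ) / 2 - (T.m : ℝ))
            ≤ Real.sqrt Q ^ (-(A:ℝ)) := by
          have s0 : Real.sqrt Q ^ (-(A:ℝ)) = Q ^ (-(A:ℝ) / 2) := by
            rw [Real.sqrt_eq_rpow, ← Real.rpow_mul hQ0.le]
            congr 1
            ring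
          rw [s0]
          have s1 : Dn μ p ^ (((T.e1 + T.e2 + T.f1 + T.f2 : ℕ) : ℝ) / 2 - (T.m : ℝ))
              ≤ Dn μ p ^ (-(A:ℝ) / 2) := by
            apply Real.rpow_le_rpow_of_exponent_le hD1
            have : ((T.e1 + T.e2 + T.f1 + T.f2 + A : ℕ) : ℝ) ≤ 2 * (T.m : ℝ) := by
              exact_mod_cast h2
            push_cast at this ⊢
            linarith
          have s2 : Dn μ p ^ (-(A:ℝ) / 2) ≤ Q ^ (-(A:ℝ) / 2) := by
            apply Real.rpow_le_rpow_of_nonpos hQ0 hQD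
            have : (0:ℝ) ≤ (A:ℝ) := Nat.cast_nonneg A
            linarith
          exact s1.trans s2
        gcongr

lemma evalL_bound {μ r : ℝ} (hμ : 1 ≤ μ) {A : ℕ} {L : List Tm}
    (hL : ∀ T ∈ L, Good A T) (p : P) :
    |evalL μ r L p| ≤ (L.map (fun T => |T.c|)).sum * (gn μ p ^ r
      * Real.sqrt (1 + |p.2.2| + p.2.1.1 ^ 2 + p.2.1.2 ^ 2) ^ (-(A:ℝ))) := by
  induction L with
  | nil => simp [evalL]
  | cons T L ih =>
      have hT := hL T List.mem_cons_self
      have hL' : ∀ T' ∈ L, Good A T' := fun T' hT' => hL T' (List.mem_cons_of_mem T hT')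
      rw [evalL_cons]
      calc |T.eval μ r p + evalL μ r L p| ≤ |T.eval μ r p| + |evalL μ r L p| := abs_add_le _ _
        _ ≤ |T.c| * (gn μ p ^ r
              * Real.sqrt (1 + |p.2.2| + p.2.1.1 ^ 2 + p.2.1.2 ^ 2) ^ (-(A:ℝ)))
            + (L.map (fun T => |T.c|)).sum * (gn μ p ^ r
              * Real.sqrt (1 + |p.2.2| + p.2.1.1 ^ 2 + p.2.1.2 ^ 2) ^ (-(A:ℝ))) :=
          add_le_add (eval_bound hμ hT p) (ih hL')
        _ = ((T :: L).map (fun T => |T.c|)).sum * (gn μ p ^ r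
              * Real.sqrt (1 + |p.2.2| + p.2.1.1 ^ 2 + p.2.1.2 ^ 2) ^ (-(A:ℝ))) := by
          simp [add_mul]

end Stmt12

open Stmt12 in
/-- Hypoellipticity of the decay weight symbol: for all multi-indices `α = (a1,a2)` (in ξ)
and `β = (b1,b2)` (in x), `|∂_ξ^α ∂_x^β d| ≤ C_{αβ} d ⟨(ξ,τ)⟩^{-|α|}` everywhere. -/
theorem stmt_12 (μ ε : ℝ) (hμ : 1 ≤ μ) (hε : 0 < ε) (hε' : ε < 1 / 2)
    (a1 a2 b1 b2 : ℕ) :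
    ∃ C : ℝ, 0 < C ∧ ∀ p : (ℝ × ℝ) × (ℝ × ℝ) × ℝ,
      |pdir ((0, 0), (1, 0), 0) a1 (pdir ((0, 0), (0, 1), 0) a2
          (pdir ((1, 0), (0, 0), 0) b1 (pdir ((0, 1), (0, 0), 0) b2
            (decaySymbol μ ε)))) p|
        ≤ C * decaySymbol μ ε p *
            Real.sqrt (1 + |p.2.2| + p.2.1.1 ^ 2 + p.2.1.2 ^ 2)
              ^ (-((a1 + a2 : ℕ) : ℝ)) := by
  set r : ℝ := 1 / 4 + ε / 2 with hrdef
  set T0 : Tm := ⟨1, 0, 0, 0, 0, 0, 0⟩ with hT0def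
  have hbase : decaySymbol μ ε = evalL μ r [T0] := by
    funext p
    simp [decaySymbol, evalL, Tm.eval, hT0def, gn, Dn, hrdef]
  set L1 : List Tm := (fun L : List Tm => L.flatMap (dX2 r))^[b2] [T0] with hL1
  set L2 : List Tm := (fun L : List Tm => L.flatMap (dX1 r))^[b1] L1 with hL2
  set L3 : List Tm := (fun L : List Tm => L.flatMap (dXi2 r))^[a2] L2 with hL3
  set L4 : List Tm := (fun L : List Tm => L.flatMap (dXi1 r))^[a1] L3 with hL4
  have hrw : pdir ((0, 0), (1, 0), 0) a1 (pdir ((0, 0), (0, 1), 0) a2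
      (pdir ((1, 0), (0, 0), 0) b1 (pdir ((0, 1), (0, 0), 0) b2
        (decaySymbol μ ε)))) = evalL μ r L4 := by
    rw [hbase,
      pdir_evalL r _ (dX2 r) (fun T p => hasDerivAt_dX2 hμ r T p) b2 [T0],
      pdir_evalL r _ (dX1 r) (fun T p => hasDerivAt_dX1 hμ r T p) b1 L1,
      pdir_evalL r _ (dXi2 r) (fun T p => hasDerivAt_dXi2 hμ r T p) a2 L2,
      pdir_evalL r _ (dXi1 r) (fun T p => hasDerivAt_dXi1 hμ r T p) a1 L3]
  have hG0 : ∀ T ∈ [T0], Good 0 T := by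
    intro T hT
    simp only [List.mem_singleton] at hT
    subst hT
    exact Or.inr (by simp [hT0def])
  have hG1 : ∀ T ∈ L1, Good 0 T :=
    good_iterate_x (dX2 r) (fun A T h => good_dX2 h) b2 hG0
  have hG2 : ∀ T ∈ L2, Good 0 T :=
    good_iterate_x (dX1 r) (fun A T h => good_dX1 h) b1 hG1
  have hG3 : ∀ T ∈ L3, Good (0 + a2) T :=
    good_iterate_xi (dXi2 r) (fun A T h => good_dXi2 h) a2 hG2
  have hG4 : ∀ T ∈ L4, Good (0 + a2 + a1) T :=
    good_iterate_xi (dXi1 r) (fun A T h => good_dXi1 h) a1 hG3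
  have hG4' : ∀ T ∈ L4, Good (a1 + a2) T := by
    intro T hT
    exact good_mono (by omega) (hG4 T hT)
  have hsum : (0:ℝ) ≤ (L4.map (fun T => |T.c|)).sum :=
    List.sum_nonneg (by
      intro x hx
      simp only [List.mem_map] at hx
      obtain ⟨T, _, rfl⟩ := hx
      exact abs_nonneg _)
  refine ⟨(L4.map (fun T => |T.c|)).sum + 1, by linarith, fun p => ?_⟩
  have hds : decaySymbol μ ε p = gn μ p ^ r := rfl
  have hbnd := evalL_bound (r := r) hμ hG4' p
  rw [hrw]
  have hpos1 : 0 < gn μ p ^ r := Real.rpow_pos_of_pos (gn_pos hμ p) r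
  have hpos2 : 0 < Real.sqrt (1 + |p.2.2| + p.2.1.1 ^ 2 + p.2.1.2 ^ 2) ^ (-((a1 + a2 : ℕ) : ℝ)) := by
    apply Real.rpow_pos_of_pos
    apply Real.sqrt_pos.mpr
    have := abs_nonneg p.2.2
    have := sq_nonneg p.2.1.1
    have := sq_nonneg p.2.1.2
    nlinarith
  calc |evalL μ r L4 p|
      ≤ (L4.map (fun T => |T.c|)).sum * (gn μ p ^ r
          * Real.sqrt (1 + |p.2.2| + p.2.1.1 ^ 2 + p.2.1.2 ^ 2) ^ (-((a1 + a2 : ℕ) : ℝ))) :=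
        hbnd
    _ ≤ ((L4.map (fun T => |T.c|)).sum + 1) * (gn μ p ^ r
          * Real.sqrt (1 + |p.2.2| + p.2.1.1 ^ 2 + p.2.1.2 ^ 2) ^ (-((a1 + a2 : ℕ) : ℝ))) := by
        nlinarith [mul_pos hpos1 hpos2]
    _ = ((L4.map (fun T => |T.c|)).sum + 1) * decaySymbol μ ε p
          * Real.sqrt (1 + |p.2.2| + p.2.1.1 ^ 2 + p.2.1.2 ^ 2) ^ (-((a1 + a2 : ℕ) : ℝ)) := by
        rw [hds]; ring
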